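/- arXiv:0704.1164 — 4 statements merged into one kernel-verified Lean document; each statement's English description precedes it below -/
import Mathlib

section
/- Let μ be a Borel probability measure on ℝ, let L be a positive integer, and let y be a real number with y > L. Assume that for every integer k with 0 < k < y and every Borel set I ⊆ (0,∞) one has μ(k + I) ≥ μ(k − I), where k + I = {k + s : s ∈ I} and k − I = {k − s : s ∈ I}. Then μ((−L, L)) ≤ ⌈y/L⌉^{−1}. -/
open MeasureTheory Set

/-- Measure-theoretic core of Lemma 2.1(iii): if a Borel probability measure `μ` on `ℝ`
satisfies the reflection-domination property `μ(k + I) ≥ μ(k − I)` for every integer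
`0 < k < y` and every Borel `I ⊆ (0,∞)`, and `y > L`, then `μ((−L,L)) ≤ ⌈y/L⌉⁻¹`. -/
theorem stmt0 (μ : Measure ℝ) [IsProbabilityMeasure μ] (L : ℕ) (hL : 0 < L)
    (y : ℝ) (hy : (L : ℝ) < y)
    (hsym : ∀ k : ℤ, 0 < k → (k : ℝ) < y → ∀ I : Set ℝ, MeasurableSet I → I ⊆ Ioi 0 →
      μ ((fun s => (k : ℝ) - s) '' I) ≤ μ ((fun s => (k : ℝ) + s) '' I)) :
    μ (Ioo (-(L : ℝ)) (L : ℝ)) ≤ ENNReal.ofReal ((⌈y / (L : ℝ)⌉ : ℝ)⁻¹) := by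
  have hLpos : (0:ℝ) < L := by exact_mod_cast hL
  have hdiv : (1:ℝ) < y / L := (one_lt_div hLpos).mpr hy
  have hceil_pos : 0 < ⌈y / (L:ℝ)⌉ := Int.ceil_pos.mpr (lt_trans one_pos hdiv)
  set n : ℕ := (⌈y / (L:ℝ)⌉).toNat with hn
  have hnceil : (n : ℤ) = ⌈y / (L:ℝ)⌉ := Int.toNat_of_nonneg hceil_pos.le
  have hnpos : 0 < n := by
    have := hceil_pos
    omega
  -- the disjoint intervals
  set D : ℕ → Set ℝ := fun j => Ioo ((2*(j:ℝ)-1)*L) ((2*(j:ℝ)+1)*L) with hD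
  have hD0 : Ioo (-(L : ℝ)) (L:ℝ) = D 0 := by
    simp [hD]
  -- domination
  have hdom : ∀ j, j < n → μ (Ioo (-(L : ℝ)) (L:ℝ)) ≤ μ (D j) := by
    intro j hj
    rcases Nat.eq_zero_or_pos j with h0 | hjpos
    · rw [h0, ← hD0]
    · have hjy : ((j:ℝ)) * L < y := by
        have h2 : ((j:ℝ)) ≤ (n:ℝ) - 1 := by
          have : ((j:ℝ)) + 1 ≤ (n:ℝ) := by exact_mod_cast hj
          linarith
        have h3 : ((n:ℝ) - 1) < y / L := by
          have : (⌈y / (L:ℝ)⌉ : ℝ) - 1 < y / L := by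
            have := Int.ceil_lt_add_one (y / (L:ℝ))
            linarith
          have hnn : ((n:ℝ)) = (⌈y / (L:ℝ)⌉ : ℝ) := by exact_mod_cast hnceil
          linarith [hnn ▸ this]
        calc ((j:ℝ)) * L ≤ ((n:ℝ) - 1) * L := by nlinarith
          _ < (y / L) * L := by nlinarith
          _ = y := div_mul_cancel₀ y hLpos.ne'
      have key := hsym ((j : ℤ) * L) (by positivity) (by push_cast; exact hjy)
        (Ioo (((j:ℝ)-1)*L) (((j:ℝ)+1)*L)) measurableSet_Ioo
        (by
          intro x hx
          have h1 : (1:ℝ) ≤ j := by exact_mod_cast hjpos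
          have : (0:ℝ) ≤ ((j:ℝ)-1)*L := by nlinarith
          exact lt_of_le_of_lt this hx.1)
      have himg1 : (fun s => (((j : ℤ) * L : ℤ) : ℝ) - s) '' Ioo (((j:ℝ)-1)*L) (((j:ℝ)+1)*L)
          = Ioo (-(L:ℝ)) (L:ℝ) := by
        rw [show (fun s => (((j : ℤ) * L : ℤ) : ℝ) - s) = (fun s => ((j:ℝ) * L) - s) by
          push_cast; rfl]
        rw [image_const_sub_Ioo]
        congr 1 <;> ring
      have himg2 : (fun s => (((j : ℤ) * L : ℤ) : ℝ) + s) '' Ioo (((j:ℝ)-1)*L) (((j:ℝ)+1)*L)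
          = D j := by
        rw [show (fun s => (((j : ℤ) * L : ℤ) : ℝ) + s) = (fun s => ((j:ℝ) * L) + s) by
          push_cast; rfl]
        rw [image_const_add_Ioo]
        simp only [hD]
        congr 1 <;> ring
      rw [himg1, himg2] at key
      exact key
  -- disjointness
  have hdisj : ∀ i ∈ Finset.range n, ∀ j ∈ Finset.range n, i ≠ j → Disjoint (D i) (D j) := by
    have key : ∀ i j : ℕ, i < j → Disjoint (D i) (D j) := by
      intro i j hij
      rw [Set.Ioo_disjoint_Ioo]
      have h1 : (i:ℝ) + 1 ≤ j := by exact_mod_cast hij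
      have : (2*(i:ℝ)+1)*L ≤ (2*(j:ℝ)-1)*L := by nlinarith
      exact le_trans (min_le_left _ _) (le_trans this (le_max_right _ _))
    intro i _ j _ hne
    rcases lt_or_gt_of_ne hne with h | h
    · exact key i j h
    · exact (key j i h).symm
  -- sum bound
  have hsum : (n : ENNReal) * μ (Ioo (-(L : ℝ)) (L:ℝ)) ≤ 1 := by
    calc (n : ENNReal) * μ (Ioo (-(L : ℝ)) (L:ℝ))
        = ∑ j ∈ Finset.range n, μ (Ioo (-(L : ℝ)) (L:ℝ)) := by
          simp [Finset.sum_const, mul_comm]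
      _ ≤ ∑ j ∈ Finset.range n, μ (D j) := by
          apply Finset.sum_le_sum
          intro j hj
          exact hdom j (Finset.mem_range.mp hj)
      _ = μ (⋃ j ∈ Finset.range n, D j) := by
          refine (measure_biUnion_finset hdisj fun j _ => measurableSet_Ioo).symm
      _ ≤ 1 := prob_le_one
  have hfin : μ (Ioo (-(L : ℝ)) (L:ℝ)) ≤ (n : ENNReal)⁻¹ := by
    rw [ENNReal.le_inv_iff_mul_le]
    rw [mul_comm]
    exact hsum
  have hcast : ENNReal.ofReal ((⌈y / (L : ℝ)⌉ : ℝ)⁻¹) = (n : ENNReal)⁻¹ := by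
    have hnn : ((⌈y / (L:ℝ)⌉ : ℝ)) = (n:ℝ) := by exact_mod_cast hnceil.symm
    rw [hnn, ENNReal.ofReal_inv_of_pos (by exact_mod_cast hnpos), ENNReal.ofReal_natCast]
  rw [hcast]
  exact hfin
end

section
/- Let A ∈ ℝ, let u : ℝ² → ℝ² and g : ℝ → ℝ be functions, let φ : ℝ × ℝ² → ℝ and w : ℝ × ℝ → ℝ be twice continuously differentiable, and assume: (a) ∂_t φ(t,x) + A·u(x)·∇_x φ(t,x) = Δ_x φ(t,x) for all (t,x); (b) ∂_t w(t,s) = g(w(t,s)) for all (t,s); (c) ∂²w/∂s²(t,s) ≥ 0 for all (t,s). Then the function ψ(t,x) := w(t, φ(t,x)) satisfies the differential inequality ∂_t ψ(t,x) + A·u(x)·∇_x ψ(t,x) ≤ Δ_x ψ(t,x) + g(ψ(t,x)) at every point (t,x) ∈ ℝ × ℝ². -/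
private lemma compDeriv {E : Type*} [NormedAddCommGroup E] [NormedSpace ℝ E]
    {F : E → ℝ} {c : ℝ → E} {v : E} {s : ℝ}
    (hF : DifferentiableAt ℝ F (c s)) (hc : HasDerivAt c v s) :
    HasDerivAt (fun x => F (c x)) (fderiv ℝ F (c s) v) s :=
  hF.hasFDerivAt.comp_hasDerivAt s hc

private lemma clm2 (L : ℝ × ℝ →L[ℝ] ℝ) (x y : ℝ) :
    L (x, y) = x * L (1, 0) + y * L (0, 1) := by
  have h : (x, y) = x • ((1:ℝ), (0:ℝ)) + y • ((0:ℝ), (1:ℝ)) := by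
    simp [Prod.ext_iff]
  rw [h, map_add, map_smul, map_smul, smul_eq_mul, smul_eq_mul]

/-- Time derivative `∂_t φ` of a function `φ = φ(t, x₁, x₂)`. -/
noncomputable def pdt (φ : ℝ → ℝ → ℝ → ℝ) (t x₁ x₂ : ℝ) : ℝ :=
  deriv (fun s => φ s x₁ x₂) t

/-- First spatial partial derivative `∂_{x₁} φ`. -/
noncomputable def pd1 (φ : ℝ → ℝ → ℝ → ℝ) (t x₁ x₂ : ℝ) : ℝ :=
  deriv (fun a => φ t a x₂) x₁

/-- Second spatial partial derivative `∂_{x₂} φ`. -/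
noncomputable def pd2 (φ : ℝ → ℝ → ℝ → ℝ) (t x₁ x₂ : ℝ) : ℝ :=
  deriv (fun b => φ t x₁ b) x₂

/-- Spatial Laplacian `Δ_x φ = ∂²_{x₁} φ + ∂²_{x₂} φ`. -/
noncomputable def plap (φ : ℝ → ℝ → ℝ → ℝ) (t x₁ x₂ : ℝ) : ℝ :=
  deriv (fun a => deriv (fun a' => φ t a' x₂) a) x₁ +
    deriv (fun b => deriv (fun b' => φ t x₁ b') b) x₂

/-- Subsolution construction from the proof of Lemma 3.2: if `φ` solves the
advection-diffusion equation `φ_t + A·u·∇φ = Δφ`, and `w = w(t,s)` satisfies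
`w_t = g(w)` and `w_{ss} ≥ 0`, then `ψ(t,x) := w(t, φ(t,x))` satisfies
`ψ_t + A·u·∇ψ ≤ Δψ + g(ψ)`. -/
theorem stmt8 (A : ℝ) (u : ℝ × ℝ → ℝ × ℝ) (g : ℝ → ℝ)
    (φ : ℝ → ℝ → ℝ → ℝ) (hφ : ContDiff ℝ 2 (fun p : ℝ × ℝ × ℝ => φ p.1 p.2.1 p.2.2))
    (w : ℝ → ℝ → ℝ) (hw : ContDiff ℝ 2 (fun p : ℝ × ℝ => w p.1 p.2))
    (ha : ∀ t x₁ x₂, pdt φ t x₁ x₂ +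
      A * ((u (x₁, x₂)).1 * pd1 φ t x₁ x₂ + (u (x₁, x₂)).2 * pd2 φ t x₁ x₂) = plap φ t x₁ x₂)
    (hb : ∀ t s, deriv (fun t' => w t' s) t = g (w t s))
    (hc : ∀ t s, 0 ≤ deriv (fun s' => deriv (fun s'' => w t s'') s') s)
    (ψ : ℝ → ℝ → ℝ → ℝ) (hψ : ∀ t x₁ x₂, ψ t x₁ x₂ = w t (φ t x₁ x₂)) :
    ∀ t x₁ x₂, pdt ψ t x₁ x₂ +
        A * ((u (x₁, x₂)).1 * pd1 ψ t x₁ x₂ + (u (x₁, x₂)).2 * pd2 ψ t x₁ x₂) ≤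
      plap ψ t x₁ x₂ + g (ψ t x₁ x₂) := by
  intro t x₁ x₂
  set Φ : ℝ × ℝ × ℝ → ℝ := fun p => φ p.1 p.2.1 p.2.2 with hΦdef
  set W : ℝ × ℝ → ℝ := fun p => w p.1 p.2 with hWdef
  have hΦd : Differentiable ℝ Φ := hφ.differentiable (by norm_num)
  have hWd : Differentiable ℝ W := hw.differentiable (by norm_num)
  set Φ1f : ℝ × ℝ × ℝ → ℝ := fun p => fderiv ℝ Φ p (0, 1, 0) with hΦ1def
  set Φ2f : ℝ × ℝ × ℝ → ℝ := fun p => fderiv ℝ Φ p (0, 0, 1) with hΦ2def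
  set W2f : ℝ × ℝ → ℝ := fun p => fderiv ℝ W p (0, 1) with hW2def
  have hΦ1d : Differentiable ℝ Φ1f :=
    ((hφ.fderiv_right (m := 1) (by norm_num)).clm_apply contDiff_const).differentiable one_ne_zero
  have hΦ2d : Differentiable ℝ Φ2f :=
    ((hφ.fderiv_right (m := 1) (by norm_num)).clm_apply contDiff_const).differentiable one_ne_zero
  have hW2d : Differentiable ℝ W2f :=
    ((hw.fderiv_right (m := 1) (by norm_num)).clm_apply contDiff_const).differentiable one_ne_zero
  -- curves
  have cT : ∀ s : ℝ, HasDerivAt (fun s' : ℝ => (s', x₁, x₂)) ((1:ℝ),(0:ℝ),(0:ℝ)) s :=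
    fun s => HasDerivAt.prodMk (hasDerivAt_id s) (HasDerivAt.prodMk (hasDerivAt_const s x₁) (hasDerivAt_const s x₂))
  have c1 : ∀ a : ℝ, HasDerivAt (fun a' : ℝ => (t, a', x₂)) ((0:ℝ),(1:ℝ),(0:ℝ)) a :=
    fun a => HasDerivAt.prodMk (hasDerivAt_const a t) (HasDerivAt.prodMk (hasDerivAt_id a) (hasDerivAt_const a x₂))
  have c2 : ∀ b : ℝ, HasDerivAt (fun b' : ℝ => (t, x₁, b')) ((0:ℝ),(0:ℝ),(1:ℝ)) b :=
    fun b => HasDerivAt.prodMk (hasDerivAt_const b t) (HasDerivAt.prodMk (hasDerivAt_const b x₁) (hasDerivAt_id b))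
  -- slice derivatives of φ
  have hφt : HasDerivAt (fun s => φ s x₁ x₂) (fderiv ℝ Φ (t, x₁, x₂) (1,0,0)) t :=
    compDeriv (hΦd _) (cT t)
  have hφ1 : ∀ a, HasDerivAt (fun a' => φ t a' x₂) (Φ1f (t, a, x₂)) a :=
    fun a => compDeriv (hΦd _) (c1 a)
  have hφ2 : ∀ b, HasDerivAt (fun b' => φ t x₁ b') (Φ2f (t, x₁, b)) b :=
    fun b => compDeriv (hΦd _) (c2 b)
  set s₀ : ℝ := φ t x₁ x₂ with hs₀
  set Φt : ℝ := fderiv ℝ Φ (t, x₁, x₂) (1,0,0) with hΦt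
  set Φ1 : ℝ := Φ1f (t, x₁, x₂) with hΦ1v
  set Φ2 : ℝ := Φ2f (t, x₁, x₂) with hΦ2v
  set W1 : ℝ := fderiv ℝ W (t, s₀) (1, 0) with hW1v
  set W2 : ℝ := W2f (t, s₀) with hW2v
  set Wss : ℝ := fderiv ℝ W2f (t, s₀) (0, 1) with hWssv
  set Φ11 : ℝ := fderiv ℝ Φ1f (t, x₁, x₂) (0,1,0) with hΦ11v
  set Φ22 : ℝ := fderiv ℝ Φ2f (t, x₁, x₂) (0,0,1) with hΦ22v
  -- identifications for φ
  have eφt : pdt φ t x₁ x₂ = Φt := hφt.deriv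
  have eφ1 : pd1 φ t x₁ x₂ = Φ1 := (hφ1 x₁).deriv
  have eφ2 : pd2 φ t x₁ x₂ = Φ2 := (hφ2 x₂).deriv
  have F2 : HasDerivAt (fun a => Φ1f (t, a, x₂)) Φ11 x₁ := compDeriv (hΦ1d _) (c1 x₁)
  have F2' : HasDerivAt (fun b => Φ2f (t, x₁, b)) Φ22 x₂ := compDeriv (hΦ2d _) (c2 x₂)
  have eφlap : plap φ t x₁ x₂ = Φ11 + Φ22 := by
    have e1 : (fun a => deriv (fun a' => φ t a' x₂) a) = fun a => Φ1f (t, a, x₂) :=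
      funext fun a => (hφ1 a).deriv
    have e2 : (fun b => deriv (fun b' => φ t x₁ b') b) = fun b => Φ2f (t, x₁, b) :=
      funext fun b => (hφ2 b).deriv
    rw [plap, e1, e2, F2.deriv, F2'.deriv]
  -- identifications for w
  have ewt : deriv (fun t' => w t' s₀) t = W1 := by
    have : HasDerivAt (fun t' => w t' s₀) (fderiv ℝ W (t, s₀) (1, 0)) t :=
      compDeriv (hWd _) (HasDerivAt.prodMk (hasDerivAt_id t) (hasDerivAt_const t s₀))
    exact this.deriv
  have hwslice : ∀ (τ σ : ℝ), HasDerivAt (fun s'' => w τ s'') (W2f (τ, σ)) σ :=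
    fun τ σ => compDeriv (hWd _) (HasDerivAt.prodMk (hasDerivAt_const σ τ) (hasDerivAt_id σ))
  have hWssnn : 0 ≤ Wss := by
    have e1 : (fun s' => deriv (fun s'' => w t s'') s') = fun s' => W2f (t, s') :=
      funext fun s' => (hwslice t s').deriv
    have h2 : HasDerivAt (fun s' => W2f (t, s')) Wss s₀ :=
      compDeriv (hW2d _) (HasDerivAt.prodMk (hasDerivAt_const s₀ t) (hasDerivAt_id s₀))
    have := hc t s₀
    rwa [e1, h2.deriv] at this
  have hW1g : W1 = g (w t s₀) := by rw [← ewt, hb t s₀]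
  -- ψ slice derivatives
  have hψ1 : ∀ a, HasDerivAt (fun a' => ψ t a' x₂)
      (W2f (t, φ t a x₂) * Φ1f (t, a, x₂)) a := by
    intro a
    have heq : (fun a' => ψ t a' x₂) = fun a' => W (t, φ t a' x₂) :=
      funext fun a' => hψ t a' x₂
    rw [heq]
    have hcv : HasDerivAt (fun a' => (t, φ t a' x₂)) ((0:ℝ), Φ1f (t, a, x₂)) a :=
      HasDerivAt.prodMk (hasDerivAt_const a t) (hφ1 a)
    have h := compDeriv (hWd _) hcv
    rwa [clm2, zero_mul, zero_add, mul_comm] at h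
  have hψ2 : ∀ b, HasDerivAt (fun b' => ψ t x₁ b')
      (W2f (t, φ t x₁ b) * Φ2f (t, x₁, b)) b := by
    intro b
    have heq : (fun b' => ψ t x₁ b') = fun b' => W (t, φ t x₁ b') :=
      funext fun b' => hψ t x₁ b'
    rw [heq]
    have hcv : HasDerivAt (fun b' => (t, φ t x₁ b')) ((0:ℝ), Φ2f (t, x₁, b)) b :=
      HasDerivAt.prodMk (hasDerivAt_const b t) (hφ2 b)
    have h := compDeriv (hWd _) hcv
    rwa [clm2, zero_mul, zero_add, mul_comm] at h
  have eψ1 : pd1 ψ t x₁ x₂ = W2 * Φ1 := (hψ1 x₁).deriv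
  have eψ2 : pd2 ψ t x₁ x₂ = W2 * Φ2 := (hψ2 x₂).deriv
  have eψt : pdt ψ t x₁ x₂ = W1 + Φt * W2 := by
    have heq : (fun s => ψ s x₁ x₂) = fun s => W (s, φ s x₁ x₂) :=
      funext fun s => hψ s x₁ x₂
    have hcv : HasDerivAt (fun s => (s, φ s x₁ x₂)) ((1:ℝ), Φt) t :=
      HasDerivAt.prodMk (hasDerivAt_id t) hφt
    have h := compDeriv (hWd _) hcv
    rw [pdt, heq, h.deriv, clm2, one_mul]
  -- W2f along the spatial curves
  have G1 : HasDerivAt (fun a => W2f (t, φ t a x₂)) (Φ1 * Wss) x₁ := by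
    have hcv : HasDerivAt (fun a => (t, φ t a x₂)) ((0:ℝ), Φ1) x₁ :=
      HasDerivAt.prodMk (hasDerivAt_const x₁ t) (hφ1 x₁)
    have h := compDeriv (hW2d _) hcv
    rwa [clm2, zero_mul, zero_add] at h
  have G2 : HasDerivAt (fun b => W2f (t, φ t x₁ b)) (Φ2 * Wss) x₂ := by
    have hcv : HasDerivAt (fun b => (t, φ t x₁ b)) ((0:ℝ), Φ2) x₂ :=
      HasDerivAt.prodMk (hasDerivAt_const x₂ t) (hφ2 x₂)
    have h := compDeriv (hW2d _) hcv
    rwa [clm2, zero_mul, zero_add] at h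
  have eψlap : plap ψ t x₁ x₂ =
      (Φ1 * Wss * Φ1 + W2 * Φ11) + (Φ2 * Wss * Φ2 + W2 * Φ22) := by
    have e1 : (fun a => deriv (fun a' => ψ t a' x₂) a)
        = fun a => W2f (t, φ t a x₂) * Φ1f (t, a, x₂) :=
      funext fun a => (hψ1 a).deriv
    have e2 : (fun b => deriv (fun b' => ψ t x₁ b') b)
        = fun b => W2f (t, φ t x₁ b) * Φ2f (t, x₁, b) :=
      funext fun b => (hψ2 b).deriv
    rw [plap, e1, e2, (HasDerivAt.fun_mul G1 F2).deriv, (HasDerivAt.fun_mul G2 F2').deriv]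
  -- assemble
  have hA := ha t x₁ x₂
  rw [eφt, eφ1, eφ2, eφlap] at hA
  have hgψ : g (ψ t x₁ x₂) = g (w t s₀) := by rw [hψ]
  rw [eψt, eψ1, eψ2, eψlap, hgψ, ← hW1g]
  have hmul : W2 * Φ11 + W2 * Φ22 =
      W2 * Φt + W2 * (A * ((u (x₁, x₂)).1 * Φ1 + (u (x₁, x₂)).2 * Φ2)) := by
    have := congrArg (W2 * ·) hA
    linarith [this]
  nlinarith [mul_nonneg hWssnn (mul_self_nonneg Φ1), mul_nonneg hWssnn (mul_self_nonneg Φ2)]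
end

section
/- Let K ≥ 0 and let g : ℝ → ℝ be convex and K-Lipschitz. Let τ > 0, λ ∈ [0,1], and let y₁, y₂, y₃ : [0,τ] → ℝ be differentiable functions satisfying y_i'(t) = g(y_i(t)) for all t ∈ [0,τ] and i = 1,2,3, with y₃(0) = λ·y₁(0) + (1−λ)·y₂(0). Then y₃(t) ≤ λ·y₁(t) + (1−λ)·y₂(t) for all t ∈ [0,τ]. -/
open Filter Topology


/-- Convexity in initial data of the flow of `y' = g(y)` for convex Lipschitz `g`
(the claim `w_s, w_{ss} ≥ 0` in the proof of Lemma 3.2): if `y₁, y₂, y₃` solve the ODE on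
`[0,τ]` and `y₃(0) = λ·y₁(0) + (1−λ)·y₂(0)`, then `y₃(t) ≤ λ·y₁(t) + (1−λ)·y₂(t)` on `[0,τ]`. -/
theorem stmt9 (K : ℝ) (hK : 0 ≤ K) (g : ℝ → ℝ)
    (hconv : ConvexOn ℝ Set.univ g) (hlip : LipschitzWith (Real.toNNReal K) g)
    (τ : ℝ) (hτ : 0 < τ) (lam : ℝ) (hlam0 : 0 ≤ lam) (hlam1 : lam ≤ 1)
    (y₁ y₂ y₃ : ℝ → ℝ)
    (h₁ : ∀ t ∈ Set.Icc (0 : ℝ) τ, HasDerivAt y₁ (g (y₁ t)) t)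
    (h₂ : ∀ t ∈ Set.Icc (0 : ℝ) τ, HasDerivAt y₂ (g (y₂ t)) t)
    (h₃ : ∀ t ∈ Set.Icc (0 : ℝ) τ, HasDerivAt y₃ (g (y₃ t)) t)
    (h0 : y₃ 0 = lam * y₁ 0 + (1 - lam) * y₂ 0) :
    ∀ t ∈ Set.Icc (0 : ℝ) τ, y₃ t ≤ lam * y₁ t + (1 - lam) * y₂ t := by
  set v : ℝ → ℝ := fun t => y₃ t - (lam * y₁ t + (1 - lam) * y₂ t) with hv_def
  set f : ℝ → ℝ := fun t => max (v t) 0 with hf_def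
  -- derivative of v
  have hv : ∀ t ∈ Set.Icc (0 : ℝ) τ,
      HasDerivAt v (g (y₃ t) - (lam * g (y₁ t) + (1 - lam) * g (y₂ t))) t := by
    intro t ht
    exact (h₃ t ht).sub (((h₁ t ht).const_mul lam).add ((h₂ t ht).const_mul (1 - lam)))
  -- pointwise bound on the derivative of v
  have hbound : ∀ t, g (y₃ t) - (lam * g (y₁ t) + (1 - lam) * g (y₂ t)) ≤ K * |v t| := by
    intro t
    have hconvle : g (lam * y₁ t + (1 - lam) * y₂ t) ≤ lam * g (y₁ t) + (1 - lam) * g (y₂ t) := by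
      have := hconv.2 (Set.mem_univ (y₁ t)) (Set.mem_univ (y₂ t)) hlam0
        (by linarith : (0:ℝ) ≤ 1 - lam) (by ring)
      simpa [smul_eq_mul] using this
    have hlipd : g (y₃ t) - g (lam * y₁ t + (1 - lam) * y₂ t) ≤ K * |v t| := by
      have h1 := hlip.dist_le_mul (y₃ t) (lam * y₁ t + (1 - lam) * y₂ t)
      rw [Real.coe_toNNReal _ hK] at h1
      have h2 : g (y₃ t) - g (lam * y₁ t + (1 - lam) * y₂ t)
          ≤ dist (g (y₃ t)) (g (lam * y₁ t + (1 - lam) * y₂ t)) := by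
        rw [Real.dist_eq]; exact le_abs_self _
      calc g (y₃ t) - g (lam * y₁ t + (1 - lam) * y₂ t)
          ≤ K * dist (y₃ t) (lam * y₁ t + (1 - lam) * y₂ t) := h2.trans h1
        _ = K * |v t| := by rw [Real.dist_eq]
    linarith
  -- continuity of f on [0, τ]
  have hvc : ContinuousOn v (Set.Icc 0 τ) := fun t ht =>
    (hv t ht).continuousAt.continuousWithinAt
  have hfc : ContinuousOn f (Set.Icc 0 τ) := fun t ht => (hvc t ht).max continuousWithinAt_const
  -- Gronwall with f' x := K * f x, δ = ε = 0
  have key : ∀ x ∈ Set.Icc (0:ℝ) τ, f x ≤ gronwallBound 0 K 0 (x - 0) := by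
    apply le_gronwallBound_of_liminf_deriv_right_le (f' := fun x => K * f x) hfc
    · intro x hx r hr
      have hx' : x ∈ Set.Icc (0:ℝ) τ := Set.Ico_subset_Icc_self hx
      have hslope : Filter.Tendsto (fun z => (z - x)⁻¹ * (v z - v x)) (𝓝[>] x)
          (𝓝 (g (y₃ x) - (lam * g (y₁ x) + (1 - lam) * g (y₂ x)))) := by
        have := (hasDerivAt_iff_tendsto_slope.1 (hv x hx'))
        have h2 : (𝓝[>] x : Filter ℝ) ≤ 𝓝[≠] x :=
          nhdsWithin_mono x (fun z hz => ne_of_gt hz)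
        refine (this.mono_left h2).congr (fun z => ?_)
        rw [slope_def_field]
        rw [div_eq_inv_mul]
      rcases lt_trichotomy (v x) 0 with hvx | hvx | hvx
      · -- v x < 0 : f ≡ 0 near x, slope eventually 0 < r
        have hr0 : (0:ℝ) < r := by
          have : f x = 0 := max_eq_right hvx.le
          rw [this] at hr; simpa using hr
        have hev : ∀ᶠ z in 𝓝[>] x, v z < 0 := by
          have : ∀ᶠ z in 𝓝 x, v z < 0 :=
            (hv x hx').continuousAt.eventually_lt continuousAt_const hvx
          exact this.filter_mono nhdsWithin_le_nhds
        refine (hev.mono fun z hz => ?_).frequently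
        have hfz : f z = 0 := max_eq_right hz.le
        have hfx : f x = 0 := max_eq_right hvx.le
        rw [hfz, hfx]; simpa using hr0
      · -- v x = 0 : slope of f = max (slope v) 0 → max (v' x) 0 ≤ 0 < r
        have hr0 : (0:ℝ) < r := by
          have : f x = 0 := by rw [hf_def]; simp [hvx]
          rw [this] at hr; simpa using hr
        have hd : g (y₃ x) - (lam * g (y₁ x) + (1 - lam) * g (y₂ x)) ≤ 0 := by
          have := hbound x; rw [hvx] at this; simpa using this
        have htend : Filter.Tendsto (fun z => max ((z - x)⁻¹ * (v z - v x)) 0) (𝓝[>] x)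
            (𝓝 (max (g (y₃ x) - (lam * g (y₁ x) + (1 - lam) * g (y₂ x))) 0)) :=
          hslope.max tendsto_const_nhds
        have hlt : max (g (y₃ x) - (lam * g (y₁ x) + (1 - lam) * g (y₂ x))) 0 < r := by
          rw [max_eq_right hd] at *
          · exact hr0
        have hev := htend.eventually_lt_const hlt
        have hself : ∀ᶠ z in 𝓝[>] x, x < z := eventually_mem_nhdsWithin
        refine ((hev.and hself).mono fun z ⟨hz1, hz2⟩ => ?_).frequently
        have hfx : f x = 0 := by rw [hf_def]; simp [hvx]
        have heq : (z - x)⁻¹ * (f z - f x) = max ((z - x)⁻¹ * (v z - v x)) 0 := by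
          rw [hfx, hvx, sub_zero, sub_zero]
          have hpos : (0:ℝ) < (z - x)⁻¹ := inv_pos.2 (by linarith)
          rw [hf_def]
          simp only
          rw [mul_comm, mul_comm ((z-x)⁻¹) (v z), max_mul_of_nonneg _ _ hpos.le, zero_mul]
        rw [heq]; exact hz1
      · -- v x > 0 : f = v near x, slope → v' x ≤ K * v x = K * f x < r
        have hfx : f x = v x := max_eq_left hvx.le
        have hd : g (y₃ x) - (lam * g (y₁ x) + (1 - lam) * g (y₂ x)) < r := by
          have := hbound x
          rw [abs_of_pos hvx] at this
          calc g (y₃ x) - (lam * g (y₁ x) + (1 - lam) * g (y₂ x)) ≤ K * v x := this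
            _ = K * f x := by rw [hfx]
            _ < r := hr
        have hev1 := hslope.eventually_lt_const hd
        have hev2 : ∀ᶠ z in 𝓝[>] x, 0 < v z := by
          have : ∀ᶠ z in 𝓝 x, 0 < v z :=
            (continuousAt_const.eventually_lt (hv x hx').continuousAt hvx)
          exact this.filter_mono nhdsWithin_le_nhds
        refine ((hev1.and hev2).mono fun z ⟨hz1, hz2⟩ => ?_).frequently
        have hfz : f z = v z := max_eq_left hz2.le
        rw [hfz, hfx]; exact hz1
    · rw [hf_def]; simp [hv_def, h0]
    · intro x hx
      simp
  intro t ht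
  have := key t ht
  rw [gronwallBound_ε0_δ0] at this
  have hvle : v t ≤ 0 := le_trans (le_max_left _ _) this
  exact sub_nonpos.mp hvle
end

section
/- Let g : ℝ → ℝ be a measurable function such that s ↦ g(s) − χ_{(−∞,0)}(s) is Lebesgue integrable on ℝ. Then the function s ↦ g(s−1) − g(s) is Lebesgue integrable on ℝ and ∫_ℝ (g(s−1) − g(s)) ds = 1. -/
open MeasureTheory

/-- Telescoping identity from the proof of Lemma 4.1: if `g − χ_{(−∞,0)}` is integrable
on `ℝ`, then `s ↦ g(s−1) − g(s)` is integrable and `∫ (g(s−1) − g(s)) ds = 1`. -/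
theorem stmt13 (g : ℝ → ℝ) (hmeas : Measurable g)
    (hint : Integrable (fun s : ℝ => g s - if s < 0 then 1 else 0)) :
    Integrable (fun s : ℝ => g (s - 1) - g s) ∧
      ∫ s : ℝ, (g (s - 1) - g s) = 1 := by
  set h : ℝ → ℝ := fun s => g s - if s < 0 then 1 else 0 with hh
  have key : (fun s : ℝ => g (s - 1) - g s)
      = fun s : ℝ => h (s - 1) - h s + Set.indicator (Set.Ico (0:ℝ) 1) (fun _ => (1:ℝ)) s := by
    funext s
    simp only [hh, Set.indicator, Set.mem_Ico]
    rcases lt_or_ge s 0 with h0 | h0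
    · rw [if_pos (by linarith), if_pos h0, if_neg (by rintro ⟨hx, _⟩; linarith)]
      ring
    rcases lt_or_ge s 1 with h1 | h1
    · rw [if_pos (by linarith), if_neg (not_lt.2 h0), if_pos ⟨h0, h1⟩]
      ring
    · rw [if_neg (by linarith), if_neg (not_lt.2 h0), if_neg (by rintro ⟨_, hx⟩; linarith)]
      ring
  have hcomp : Integrable (fun s : ℝ => h (s - 1)) := hint.comp_sub_right 1
  have hind : Integrable (Set.indicator (Set.Ico (0:ℝ) 1) (fun _ => (1:ℝ))) :=
    (integrable_indicator_iff measurableSet_Ico).2 (integrableOn_const (by simp) (by simp))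
  have hInt : Integrable (fun s : ℝ => g (s - 1) - g s) := by
    rw [key]; exact (hcomp.sub hint).add hind
  refine ⟨hInt, ?_⟩
  have hadd := integral_add (μ := volume)
    (hcomp.sub hint : Integrable fun s : ℝ => h (s - 1) - h s) hind
  rw [key, hadd, integral_sub hcomp hint, integral_sub_right_eq_self h 1,
    integral_indicator_const _ measurableSet_Ico]
  simp
end
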